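/- arXiv:2112.13973 — 3 statements merged into one kernel-verified Lean document; each statement's English description precedes it below -/
import Mathlib

section
/- Uniform boundedness of solutions of the quasilinear discrete PDE: let φ : ℝ → ℝ be strictly increasing and continuous, f : ℝ → ℝ continuous with u·f(u) < 0 for |u| large, and K > 0. Suppose u₋ < u₊ satisfy f(u₋) > 0, f(u₊) < 0, and u₋ < uᴺ(0, x/N) < u₊ for all x. Then the solution of ∂_t u = Δᴺ φ(u) + K f(u) on (1/N)(ℤ/Nℤ)ⁿ satisfies u₋ ≤ uᴺ(t, x/N) ≤ u₊ for all t ≥ 0 and all x. -/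
open Finset Filter

/-- Embed an integer vector into the discrete torus `(ℤ/Nℤ)ⁿ`. -/
def castVec {n N : ℕ} (e : Fin n → ℤ) : Fin n → ZMod N := fun j => (e j : ZMod N)

/-- Forward discrete derivative `∇ᴺ_e f(x/N) = N (f((x+e)/N) - f(x/N))`. -/
def dgrad {n N : ℕ} (e : Fin n → ℤ) (f : (Fin n → ZMod N) → ℝ) (x : Fin n → ZMod N) : ℝ :=
  (N : ℝ) * (f (x + castVec e) - f x)

/-- Backward discrete derivative `∇ᴺ*_e f(x/N) = N (f((x-e)/N) - f(x/N))`. -/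
def dgradStar {n N : ℕ} (e : Fin n → ℤ) (f : (Fin n → ZMod N) → ℝ) (x : Fin n → ZMod N) : ℝ :=
  (N : ℝ) * (f (x - castVec e) - f x)

/-- `e ∈ ℤⁿ` is a unit vector (`|e| = 1`). -/
def IsUnitVec {n : ℕ} (e : Fin n → ℤ) : Prop :=
  ∃ i, (e i = 1 ∨ e i = -1) ∧ ∀ j, j ≠ i → e j = 0

/-- The discrete Laplacian `Δᴺ v(x/N) = N² Σ_{|e|=1} (v((x+e)/N) - v(x/N))`. -/
def dLap {n N : ℕ} (f : (Fin n → ZMod N) → ℝ) (x : Fin n → ZMod N) : ℝ :=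
  (N : ℝ) ^ 2 * ∑ i : Fin n,
    ((f (x + castVec (Pi.single i 1)) - f x)
      + (f (x - castVec (Pi.single i 1)) - f x))

lemma dLap_neg {n N : ℕ} (f : (Fin n → ZMod N) → ℝ) (x : Fin n → ZMod N) :
    dLap (fun y => -(f y)) x = -dLap f x := by
  simp only [dLap, ← mul_neg, ← Finset.sum_neg_distrib]
  congr 1; apply Finset.sum_congr rfl; intro i _; ring

lemma upper {n N : ℕ} [Finite (Fin n → ZMod N)] (φ f : ℝ → ℝ) (K : ℝ)
    (hφmono : StrictMono φ) (hfcont : Continuous f)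
    (hK : 0 < K) (up : ℝ) (hfp : f up < 0)
    (u : ℝ → (Fin n → ZMod N) → ℝ)
    (hu : ∀ x, ∀ t : ℝ, 0 ≤ t →
      HasDerivAt (fun s => u s x) (dLap (fun y => φ (u t y)) x + K * f (u t x)) t)
    (h0 : ∀ x, u 0 x < up) :
    ∀ t : ℝ, 0 ≤ t → ∀ x, u t x ≤ up := by
  -- Step A : f < 0 on [up, up+δ]
  obtain ⟨δ, hδpos, hδ⟩ : ∃ δ > 0, ∀ v ∈ Set.Icc up (up + δ), f v < 0 := by
    have hev : ∀ᶠ v in nhds up, f v < 0 :=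
      (hfcont.continuousAt (x := up)).eventually_lt continuousAt_const hfp
    obtain ⟨ε, hε, hball⟩ := Metric.eventually_nhds_iff.mp hev
    refine ⟨ε/2, by linarith, fun v hv => hball ?_⟩
    rw [Real.dist_eq, abs_lt]
    constructor <;> [linarith [hv.1]; linarith [hv.2]]
  -- Step B : barrier bound
  have main : ∀ t₀ > (0:ℝ), ∀ ε : ℝ, 0 < ε → ε * t₀ ≤ δ →
      ∀ t ∈ Set.Icc 0 t₀, ∀ x, u t x ≤ up + ε * t := by
    intro t₀ ht₀ ε hε hεt
    by_contra hcon
    push_neg at hcon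
    obtain ⟨t1, ht1, x1, hx1⟩ := hcon
    set B : Set ℝ := {t | t ∈ Set.Icc 0 t₀ ∧ ∃ x, up + ε * t < u t x} with hBdef
    have hBne : B.Nonempty := ⟨t1, ht1, x1, hx1⟩
    have hBbd : BddBelow B := ⟨0, fun t ht => ht.1.1⟩
    set T := sInf B with hTdef
    have hTt1 : T ≤ t1 := csInf_le hBbd ⟨ht1, x1, hx1⟩
    have hTmem : T ∈ Set.Icc 0 t₀ :=
      ⟨le_csInf hBne fun t ht => ht.1.1, hTt1.trans ht1.2⟩
    have hT0 : (0:ℝ) ≤ T := hTmem.1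
    have hcont : ∀ x, ∀ t : ℝ, 0 ≤ t → ContinuousAt (fun s => u s x) t :=
      fun x t ht => (hu x t ht).continuousAt
    -- T is not in B
    have hTnot : ∀ y, u T y ≤ up + ε * T := by
      by_contra h
      push_neg at h
      obtain ⟨y, hy⟩ := h
      rcases eq_or_lt_of_le hT0 with h0T | h0T
      · have := h0 y
        rw [← h0T] at hy
        simp only [mul_zero, add_zero] at hy; linarith
      · have hc : ContinuousAt (fun s => u s y - (up + ε * s)) T :=
          (hcont y T hT0).sub (by fun_prop)
        have hev1 : ∀ᶠ s in nhds T, 0 < u s y - (up + ε * s) :=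
          (continuousAt_const : ContinuousAt (fun _ => (0:ℝ)) T).eventually_lt hc
            (by simpa using sub_pos.mpr hy)
        have hev2 : ∀ᶠ s in nhds T, 0 < s := eventually_gt_nhds h0T
        obtain ⟨s, hs, hsT⟩ :=
          (((hev1.and hev2).filter_mono nhdsWithin_le_nhds).and
            self_mem_nhdsWithin (f := nhdsWithin T (Set.Iio T))).exists
        exact absurd (csInf_le hBbd ⟨⟨hs.2.le, hsT.le.trans hTmem.2⟩, y, by linarith [hs.1]⟩)
          (not_le.mpr hsT)
    -- there is x with u T x = up + ε T
    obtain ⟨x, hux⟩ : ∃ x, u T x = up + ε * T := by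
      have hclos : T ∈ closure B := csInf_mem_closure hBne hBbd
      have hfreq : ∃ᶠ t in nhds T, t ∈ B := mem_closure_iff_frequently.mp hclos
      by_contra h
      push_neg at h
      have hlt : ∀ x, u T x < up + ε * T := fun x => lt_of_le_of_ne (hTnot x) (h x)
      have hevall : ∀ᶠ t in nhds T, ∀ x, u t x < up + ε * t := by
        rw [Filter.eventually_all]
        intro x
        have hc : ContinuousAt (fun s => u s x - (up + ε * s)) T :=
          (hcont x T hT0).sub (by fun_prop)
        have := hc.eventually_lt (continuousAt_const : ContinuousAt (fun _ => (0:ℝ)) T)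
          (by simpa using sub_neg.mpr (hlt x))
        filter_upwards [this] with s hs; linarith
      exact (hfreq.and_eventually hevall).exists.elim
        fun t ⟨htB, hta⟩ => absurd htB.2 (by push_neg; exact fun x => (hta x).le)
    -- T > 0
    have hTpos : 0 < T := by
      rcases eq_or_lt_of_le hT0 with h0T | h0T
      · exfalso; have := h0 x; rw [← h0T] at hux; simp only [mul_zero, add_zero] at hux; linarith
      · exact h0T
    -- the derivative at (T, x) is negative
    have hlap : dLap (fun y => φ (u T y)) x ≤ 0 := by
      apply mul_nonpos_of_nonneg_of_nonpos (by positivity)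
      apply Finset.sum_nonpos
      intro i _
      have h1 : φ (u T (x + castVec (Pi.single i 1))) ≤ φ (u T x) := by
        apply hφmono.monotone; rw [hux]; exact hTnot _
      have h2 : φ (u T (x - castVec (Pi.single i 1))) ≤ φ (u T x) := by
        apply hφmono.monotone; rw [hux]; exact hTnot _
      linarith
    have hfT : f (u T x) < 0 := by
      rw [hux]
      apply hδ
      constructor
      · nlinarith
      · have : ε * T ≤ ε * t₀ := mul_le_mul_of_nonneg_left hTmem.2 hε.le
        linarith
    have hD : dLap (fun y => φ (u T y)) x + K * f (u T x) < 0 := by nlinarith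
    -- slope contradiction from the left
    have hg : HasDerivAt (fun s => u s x - (up + ε * s))
        (dLap (fun y => φ (u T y)) x + K * f (u T x) - ε) T := by
      have hb : HasDerivAt (fun s => up + ε * s) ε T := by
        simpa using ((hasDerivAt_id T).const_mul ε).const_add up
      exact (hu x T hT0).sub hb
    have hslope : Tendsto (slope (fun s => u s x - (up + ε * s)) T) (nhdsWithin T (Set.Iio T))
        (nhds (dLap (fun y => φ (u T y)) x + K * f (u T x) - ε)) :=
      (hasDerivAt_iff_tendsto_slope.mp hg).mono_left
        (nhdsWithin_mono T (fun s hs => ne_of_lt hs))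
    have hev : ∀ᶠ s in nhdsWithin T (Set.Iio T),
        0 ≤ slope (fun s => u s x - (up + ε * s)) T s := by
      filter_upwards [eventually_nhdsWithin_of_eventually_nhds (eventually_gt_nhds hTpos),
        self_mem_nhdsWithin] with s hs0 hsT'
      have hsT : s < T := hsT'
      have hsB : s ∉ B := fun hmem => absurd (csInf_le hBbd hmem) (not_le.mpr hsT)
      have hgs : u s x - (up + ε * s) ≤ 0 := by
        have : ∀ y, u s y ≤ up + ε * s := by
          by_contra hy; push_neg at hy
          exact hsB ⟨⟨hs0.le, (le_of_lt hsT).trans hTmem.2⟩, hy⟩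
        linarith [this x]
      rw [slope_def_field]
      have hgT : u T x - (up + ε * T) = 0 := by rw [hux]; ring
      rw [hgT, sub_zero]
      have hst : s - T ≤ 0 := by linarith [hsT]
      have := div_nonneg (neg_nonneg.2 hgs) (neg_nonneg.2 hst)
      rwa [neg_div_neg_eq] at this
    have : (0:ℝ) ≤ dLap (fun y => φ (u T y)) x + K * f (u T x) - ε :=
      ge_of_tendsto hslope hev
    linarith
  -- Step C : conclude
  intro t ht x
  rcases eq_or_lt_of_le ht with h0t | h0t
  · rw [← h0t]; exact (h0 x).le
  · apply le_of_forall_pos_le_add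
    intro η hη
    have hεpos : 0 < min (δ / t) (η / t) := lt_min (by positivity) (by positivity)
    have h1 : min (δ / t) (η / t) * t ≤ δ := by
      have := mul_le_mul_of_nonneg_right (min_le_left (δ/t) (η/t)) h0t.le
      rwa [div_mul_cancel₀ δ (ne_of_gt h0t)] at this
    have h2 : min (δ / t) (η / t) * t ≤ η := by
      have := mul_le_mul_of_nonneg_right (min_le_right (δ/t) (η/t)) h0t.le
      rwa [div_mul_cancel₀ η (ne_of_gt h0t)] at this
    have := main t h0t _ hεpos h1 t ⟨ht, le_refl t⟩ x
    linarith

lemma both {n N : ℕ} [Finite (Fin n → ZMod N)] (φ f : ℝ → ℝ) (K : ℝ)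
    (hφmono : StrictMono φ) (hfcont : Continuous f)
    (hK : 0 < K) (um up : ℝ) (hfm : 0 < f um) (hfp : f up < 0)
    (u : ℝ → (Fin n → ZMod N) → ℝ)
    (hu : ∀ x, ∀ t : ℝ, 0 ≤ t →
      HasDerivAt (fun s => u s x) (dLap (fun y => φ (u t y)) x + K * f (u t x)) t)
    (h0 : ∀ x, u 0 x ∈ Set.Ioo um up) :
    ∀ t : ℝ, 0 ≤ t → ∀ x, u t x ∈ Set.Icc um up := by
  intro t ht x
  constructor
  · have hlow := upper (fun r => -φ (-r)) (fun r => -f (-r)) K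
      (fun a b hab => neg_lt_neg (hφmono (neg_lt_neg hab)))
      ((hfcont.comp continuous_neg).neg) hK (-um) (by simpa using hfm)
      (fun s y => -u s y) ?_ (fun y => neg_lt_neg (h0 y).1) t ht x
    · linarith
    · intro y s hs
      have h1 := (hu y s hs).neg
      have heq : dLap (fun z => -φ (-(-u s z))) y + K * -f (-(-u s y))
          = -(dLap (fun z => φ (u s z)) y + K * f (u s y)) := by
        simp only [neg_neg]
        rw [dLap_neg (fun z => φ (u s z)) y]
        ring
      rw [heq]
      exact h1
  · exact upper φ f K hφmono hfcont hK up hfp u hu (fun y => (h0 y).2) t ht x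

/-- Uniform boundedness (1.2) of solutions of the quasilinear discrete PDE
`∂_t u = Δᴺ φ(u) + K f(u)` (Section 2.5). -/
theorem stmt10 {n : ℕ} (N : ℕ) (φ f : ℝ → ℝ) (K : ℝ)
    (hφmono : StrictMono φ) (hφcont : Continuous φ) (hfcont : Continuous f)
    (hsign : ∃ M : ℝ, ∀ v : ℝ, M ≤ |v| → v * f v < 0)
    (hK : 0 < K) (um up : ℝ) (hfm : 0 < f um) (hfp : f up < 0)
    (u : ℝ → (Fin n → ZMod N) → ℝ)
    (hu : ∀ x, ∀ t : ℝ, 0 ≤ t →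
      HasDerivAt (fun s => u s x) (dLap (fun y => φ (u t y)) x + K * f (u t x)) t)
    (h0 : ∀ x, u 0 x ∈ Set.Ioo um up) :
    ∀ t : ℝ, 0 ≤ t → ∀ x, u t x ∈ Set.Icc um up := by
  rcases Nat.eq_zero_or_pos N with hN | hN
  · subst hN
    intro t ht x
    have key := both (n := n) (N := 1) φ f K hφmono hfcont hK um up hfm hfp
      (fun s _ => u s x) ?_ (fun _ => h0 x) t ht (fun _ => 0)
    · exact key
    · intro y s hs
      have h1 := hu x s hs
      have e0 : dLap (n := n) (N := 0) (fun z => φ (u s z)) x = 0 := by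
        simp [dLap]
      have e1 : dLap (n := n) (N := 1) (fun _ : Fin n → ZMod 1 => φ (u s x)) y = 0 := by
        simp [dLap]
      rw [e1]
      rw [e0] at h1
      exact h1
  · haveI : NeZero N := ⟨hN.ne'⟩
    exact both φ f K hφmono hfcont hK um up hfm hfp u hu h0
end

section
/- Interpolation inequality for discrete gradients: let α ∈ (0,1), Ω = [0,T] × Tⁿ, and let u : Ω → ℝ. Define the discrete derivative ∇ᴺ_e u(t,z) = N(u(t, z+e/N) − u(t,z)), the oscillation [u]₀ = osc_Ω u, the weighted seminorm [u]*_{1+α} = sup_{X≠Y} (d(X)∧d(Y))^{1+α} |∇ᴺu(X) − ∇ᴺu(Y)|/|X−Y|^α with d((t,z)) = √t and parabolic distance |X−Y| = max(|t−s|^{1/2}, |z−y|), and U₁ = sup_X d(X)·max_e |∇ᴺ_e u(X)|. Then U₁ ≤ 3·[u]₀^{α/(1+α)}·([u]₀ + [u]*_{1+α})^{1/(1+α)}. -/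
open Finset

/-- Euclidean distance on the continuous torus `Tⁿ = (ℝ/ℤ)ⁿ`. -/
noncomputable def torusDist {n : ℕ} (z y : Fin n → AddCircle (1 : ℝ)) : ℝ :=
  Real.sqrt (∑ i : Fin n, (dist (z i) (y i)) ^ 2)

/-- Parabolic distance `|X - Y| = max(|t-s|^{1/2}, |z-y|)` on `ℝ × Tⁿ`. -/
noncomputable def parDist {n : ℕ} (X Y : ℝ × (Fin n → AddCircle (1 : ℝ))) : ℝ :=
  max (Real.sqrt |X.1 - Y.1|) (torusDist X.2 Y.2)

/-- Parabolic distance to the boundary `{t = 0}`: `d(X) = √t`. -/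
noncomputable def dWeight {n : ℕ} (X : ℝ × (Fin n → AddCircle (1 : ℝ))) : ℝ :=
  Real.sqrt X.1

/-- Shift of a torus point by `e_i / N`. -/
noncomputable def shiftC {n : ℕ} (N : ℕ) (i : Fin n)
    (z : Fin n → AddCircle (1 : ℝ)) : Fin n → AddCircle (1 : ℝ) :=
  Function.update z i (z i + (((N : ℝ)⁻¹ : ℝ) : AddCircle (1 : ℝ)))

/-- Discrete derivative `∇ᴺ_{e_i} u(t,z) = N (u(t, z + e_i/N) - u(t,z))` of a
function on `Ω = [0,T] × Tⁿ`. -/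
noncomputable def cgrad {n : ℕ} (N : ℕ) (i : Fin n)
    (u : ℝ × (Fin n → AddCircle (1 : ℝ)) → ℝ)
    (X : ℝ × (Fin n → AddCircle (1 : ℝ))) : ℝ :=
  (N : ℝ) * (u (X.1, shiftC N i X.2) - u X)

lemma shiftC_iter {n : ℕ} (N : ℕ) (i : Fin n) (z : Fin n → AddCircle (1 : ℝ)) :
    ∀ k : ℕ, (shiftC N i)^[k] z
      = Function.update z i (z i + (((k : ℝ) / (N : ℝ) : ℝ) : AddCircle (1 : ℝ))) := by
  intro k
  induction k with
  | zero => simp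
  | succ k ih =>
    rw [Function.iterate_succ_apply', ih, shiftC, Function.update_self,
      Function.update_idem, add_assoc, ← AddCircle.coe_add]
    have hc : ((k : ℝ) / N + (N : ℝ)⁻¹) = ((k + 1 : ℕ) : ℝ) / N := by
      push_cast
      rw [inv_eq_one_div, ← add_div]
    rw [hc]

lemma torusDist_shiftC_iter {n : ℕ} (N : ℕ) (i : Fin n) (z : Fin n → AddCircle (1 : ℝ))
    (k : ℕ) : torusDist z ((shiftC N i)^[k] z) ≤ (k : ℝ) / (N : ℝ) := by
  rw [shiftC_iter]
  have hco : ∀ j : Fin n, j ≠ i →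
      (dist (z j) (Function.update z i
        (z i + (((k : ℝ) / (N : ℝ) : ℝ) : AddCircle (1 : ℝ))) j)) ^ 2 = 0 := by
    intro j hj
    rw [Function.update_of_ne hj]
    simp
  have hTD : torusDist z (Function.update z i
      (z i + (((k : ℝ) / (N : ℝ) : ℝ) : AddCircle (1 : ℝ))))
      = dist (z i) (z i + (((k : ℝ) / (N : ℝ) : ℝ) : AddCircle (1 : ℝ))) := by
    rw [torusDist, Fintype.sum_eq_single i hco, Function.update_self]
    exact Real.sqrt_sq dist_nonneg
  rw [hTD, dist_self_add_right]
  calc ‖(((k : ℝ) / (N : ℝ) : ℝ) : AddCircle (1 : ℝ))‖ ≤ |(k : ℝ) / (N : ℝ)| := by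
        rw [AddCircle.norm_eq]; simpa using round_le ((k : ℝ) / (N : ℝ)) 0
    _ = (k : ℝ) / (N : ℝ) := abs_of_nonneg (by positivity)

lemma cgrad_telescope {n : ℕ} (N : ℕ) (i : Fin n)
    (u : ℝ × (Fin n → AddCircle (1 : ℝ)) → ℝ) (t : ℝ) (z : Fin n → AddCircle (1 : ℝ)) :
    ∀ m : ℕ, ∑ k ∈ Finset.range m, cgrad N i u (t, (shiftC N i)^[k] z)
      = (N : ℝ) * (u (t, (shiftC N i)^[m] z) - u (t, z)) := by
  intro m
  induction m with
  | zero => simp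
  | succ m ih =>
    rw [Finset.sum_range_succ, ih, cgrad]
    simp only [Function.iterate_succ_apply']
    ring

/-- Interpolation inequality (4.18) of Proposition 4.5:
`U₁ ≤ 3 [u]₀^{α/(1+α)} ([u]₀ + [u]*_{1+α})^{1/(1+α)}`, stated in terms of
bounds `K₀` on the oscillation `[u]₀` and `K₁` on the weighted seminorm
`[u]*_{1+α}`. -/
theorem stmt12 {n : ℕ} (N : ℕ) (T α : ℝ) (hα0 : 0 < α) (hα1 : α < 1) (hT : 0 < T)
    (u : ℝ × (Fin n → AddCircle (1 : ℝ)) → ℝ) (K₀ K₁ : ℝ)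
    (hK₀ : 0 ≤ K₀) (hK₁ : 0 ≤ K₁)
    (hosc : ∀ X Y : ℝ × (Fin n → AddCircle (1 : ℝ)),
      X.1 ∈ Set.Icc (0 : ℝ) T → Y.1 ∈ Set.Icc (0 : ℝ) T → |u X - u Y| ≤ K₀)
    (hsemi : ∀ X Y : ℝ × (Fin n → AddCircle (1 : ℝ)),
      X.1 ∈ Set.Icc (0 : ℝ) T → Y.1 ∈ Set.Icc (0 : ℝ) T → X ≠ Y → ∀ i : Fin n,
      (min (dWeight X) (dWeight Y)) ^ (1 + α) * |cgrad N i u X - cgrad N i u Y|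
        ≤ K₁ * (parDist X Y) ^ α) :
    ∀ X : ℝ × (Fin n → AddCircle (1 : ℝ)), X.1 ∈ Set.Icc (0 : ℝ) T → ∀ i : Fin n,
      dWeight X * |cgrad N i u X|
        ≤ 3 * K₀ ^ (α / (1 + α)) * (K₀ + K₁) ^ (1 / (1 + α)) := by
  intro X hX i
  obtain ⟨t, z⟩ := X
  simp only [Set.mem_Icc] at hX
  obtain ⟨ht0, htT⟩ := hX
  have hmem : ∀ w : Fin n → AddCircle (1 : ℝ),
      ((t, w) : ℝ × (Fin n → AddCircle (1 : ℝ))).1 ∈ Set.Icc (0 : ℝ) T := by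
    intro w; exact Set.mem_Icc.mpr ⟨ht0, htT⟩
  have h1α : (0 : ℝ) < 1 + α := by linarith
  have hE : ∃ E : ℝ, E = K₀ ^ (α / (1 + α)) * (K₀ + K₁) ^ (1 / (1 + α)) := ⟨_, rfl⟩
  obtain ⟨E, hE⟩ := hE
  have hEnn : 0 ≤ E := by
    rw [hE]
    exact mul_nonneg (Real.rpow_nonneg hK₀ _) (Real.rpow_nonneg (by linarith) _)
  have hRHS3 : 3 * K₀ ^ (α / (1 + α)) * (K₀ + K₁) ^ (1 / (1 + α)) = 3 * E := by
    rw [hE, mul_assoc]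
  have hRHS : (0 : ℝ) ≤ 3 * K₀ ^ (α / (1 + α)) * (K₀ + K₁) ^ (1 / (1 + α)) := by
    rw [hRHS3]; linarith
  -- trivial case K₀ = 0
  rcases eq_or_lt_of_le hK₀ with hK0 | hK0
  · have hz : |cgrad N i u (t, z)| = 0 := by
      rw [cgrad, abs_mul, abs_of_nonneg (Nat.cast_nonneg N)]
      have hb := hosc (t, shiftC N i z) (t, z) (hmem _) (hmem _)
      have h0 : |u (t, shiftC N i z) - u (t, z)| = 0 :=
        le_antisymm (by simpa [← hK0] using hb) (abs_nonneg _)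
      simp [h0]
    rw [hz, mul_zero]; exact hRHS
  -- trivial case N = 0
  rcases Nat.eq_zero_or_pos N with hN | hN
  · subst hN
    simp only [cgrad, Nat.cast_zero, zero_mul, abs_zero, mul_zero]
    exact hRHS
  -- trivial case t = 0
  rcases eq_or_lt_of_le ht0 with ht | ht
  · simp only [dWeight, ← ht, Real.sqrt_zero, zero_mul]
    exact hRHS
  -- main case
  rw [hRHS3]
  simp only [dWeight]
  obtain ⟨d, hd⟩ : ∃ d : ℝ, d = Real.sqrt t := ⟨_, rfl⟩
  rw [← hd]
  have hd0 : 0 < d := by rw [hd]; exact Real.sqrt_pos.mpr ht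
  have hs : (0 : ℝ) < K₀ + K₁ := by linarith
  obtain ⟨θ, hθdef⟩ : ∃ θ : ℝ, θ = (K₀ / (K₀ + K₁)) ^ (1 / (1 + α)) := ⟨_, rfl⟩
  have hθ0 : 0 < θ := by rw [hθdef]; exact Real.rpow_pos_of_pos (div_pos hK0 hs) _
  obtain ⟨r, hrdef⟩ : ∃ r : ℝ, r = d * θ := ⟨_, rfl⟩
  have hr0 : 0 < r := by rw [hrdef]; exact mul_pos hd0 hθ0
  -- key algebraic identities
  have hθ_eq : θ = K₀ ^ (1 / (1 + α)) * ((K₀ + K₁) ^ (1 / (1 + α)))⁻¹ := by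
    rw [hθdef, Real.div_rpow hK₀ hs.le, div_eq_mul_inv]
  have hI1 : K₀ / θ = E := by
    have he : (1 : ℝ) - 1 / (1 + α) = α / (1 + α) := by field_simp; ring
    have hK : K₀ / K₀ ^ (1 / (1 + α)) = K₀ ^ (α / (1 + α)) := by
      rw [← he, Real.rpow_sub hK0, Real.rpow_one]
    rw [hθ_eq, div_eq_mul_inv, mul_inv, inv_inv, ← mul_assoc, ← div_eq_mul_inv, hK, hE]
  have hθα : θ ^ α = K₀ ^ (α / (1 + α)) * ((K₀ + K₁) ^ (α / (1 + α)))⁻¹ := by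
    have ha : (1 / (1 + α)) * α = α / (1 + α) := by ring
    rw [hθdef, ← Real.rpow_mul (div_pos hK0 hs).le, ha, Real.div_rpow hK₀ hs.le,
      div_eq_mul_inv]
  have hI2 : K₁ * θ ^ α ≤ E := by
    have h1a : (1 : ℝ) - α / (1 + α) = 1 / (1 + α) := by field_simp; ring
    have hB : (K₀ + K₁) * ((K₀ + K₁) ^ (α / (1 + α)))⁻¹ = (K₀ + K₁) ^ (1 / (1 + α)) := by
      rw [← h1a, Real.rpow_sub hs, Real.rpow_one]
      exact (div_eq_mul_inv _ _).symm
    calc K₁ * θ ^ α ≤ (K₀ + K₁) * θ ^ α := by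
          apply mul_le_mul_of_nonneg_right (by linarith) (Real.rpow_nonneg hθ0.le α)
      _ = E := by rw [hθα, mul_left_comm, hB, hE, mul_comm]
  have hdr : d * (K₀ / r) = K₀ / θ := by
    rw [hrdef]
    field_simp
  -- pointwise estimate for each m
  have hmain : ∀ m : ℕ,
      (m : ℝ) * |cgrad N i u (t, z)| ≤ (N : ℝ) * K₀
        + (m : ℝ) * (K₁ * ((m : ℝ) / (N : ℝ)) ^ α / d ^ (1 + α)) := by
    intro m
    have hQnn : 0 ≤ K₁ * ((m : ℝ) / (N : ℝ)) ^ α / d ^ (1 + α) :=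
      div_nonneg (mul_nonneg hK₁ (Real.rpow_nonneg (by positivity) α))
        (Real.rpow_nonneg hd0.le _)
    have hterm : ∀ k ∈ Finset.range m,
        |cgrad N i u (t, z) - cgrad N i u (t, (shiftC N i)^[k] z)|
          ≤ K₁ * ((m : ℝ) / (N : ℝ)) ^ α / d ^ (1 + α) := by
      intro k hk
      rcases eq_or_ne ((t, (shiftC N i)^[k] z) : ℝ × (Fin n → AddCircle (1 : ℝ))) (t, z)
        with hY | hY
      · rw [hY, sub_self, abs_zero]; exact hQnn
      · have hsem := hsemi (t, z) (t, (shiftC N i)^[k] z) (hmem _) (hmem _) (Ne.symm hY) i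
        have hdw : min (dWeight ((t, z) : ℝ × (Fin n → AddCircle (1 : ℝ))))
            (dWeight ((t, (shiftC N i)^[k] z) : ℝ × (Fin n → AddCircle (1 : ℝ)))) = d := by
          simp only [dWeight]
          rw [min_self, ← hd]
        have hpd : parDist ((t, z) : ℝ × (Fin n → AddCircle (1 : ℝ)))
            (t, (shiftC N i)^[k] z) ≤ (m : ℝ) / (N : ℝ) := by
          rw [parDist]
          simp only [sub_self, abs_zero, Real.sqrt_zero]
          refine max_le (by positivity) ?_
          refine (torusDist_shiftC_iter N i z k).trans ?_
          have hNpos : (0 : ℝ) < (N : ℝ) := by exact_mod_cast hN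
          rw [div_le_div_iff₀ hNpos hNpos]
          have hkm : (k : ℝ) ≤ (m : ℝ) := by
            exact_mod_cast (Finset.mem_range.mp hk).le
          nlinarith
        rw [hdw] at hsem
        have hpdnn : 0 ≤ parDist ((t, z) : ℝ × (Fin n → AddCircle (1 : ℝ)))
            (t, (shiftC N i)^[k] z) := le_max_of_le_left (Real.sqrt_nonneg _)
        have h2 : K₁ * (parDist ((t, z) : ℝ × (Fin n → AddCircle (1 : ℝ)))
            (t, (shiftC N i)^[k] z)) ^ α ≤ K₁ * ((m : ℝ) / (N : ℝ)) ^ α :=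
          mul_le_mul_of_nonneg_left (Real.rpow_le_rpow hpdnn hpd hα0.le) hK₁
        rw [le_div_iff₀ (Real.rpow_pos_of_pos hd0 _)]
        calc |cgrad N i u (t, z) - cgrad N i u (t, (shiftC N i)^[k] z)| * d ^ (1 + α)
            = d ^ (1 + α) * |cgrad N i u (t, z) - cgrad N i u (t, (shiftC N i)^[k] z)| :=
              mul_comm _ _
          _ ≤ K₁ * (parDist ((t, z) : ℝ × (Fin n → AddCircle (1 : ℝ)))
              (t, (shiftC N i)^[k] z)) ^ α := hsem
          _ ≤ K₁ * ((m : ℝ) / (N : ℝ)) ^ α := h2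
    have key : (m : ℝ) * cgrad N i u (t, z)
        = (N : ℝ) * (u (t, (shiftC N i)^[m] z) - u (t, z))
        + ∑ k ∈ Finset.range m, (cgrad N i u (t, z) - cgrad N i u (t, (shiftC N i)^[k] z)) := by
      rw [← cgrad_telescope N i u t z m, Finset.sum_sub_distrib, Finset.sum_const,
        Finset.card_range, nsmul_eq_mul]
      ring
    have hb : |(m : ℝ) * cgrad N i u (t, z)| ≤ (N : ℝ) * K₀
        + (m : ℝ) * (K₁ * ((m : ℝ) / (N : ℝ)) ^ α / d ^ (1 + α)) := by
      rw [key]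
      refine (abs_add_le _ _).trans (add_le_add ?_ ?_)
      · rw [abs_mul, abs_of_nonneg (Nat.cast_nonneg N)]
        exact mul_le_mul_of_nonneg_left (hosc _ _ (hmem _) (hmem _)) (Nat.cast_nonneg N)
      · calc |∑ k ∈ Finset.range m, (cgrad N i u (t, z) - cgrad N i u (t, (shiftC N i)^[k] z))|
            ≤ ∑ k ∈ Finset.range m, |cgrad N i u (t, z) - cgrad N i u (t, (shiftC N i)^[k] z)| :=
              Finset.abs_sum_le_sum_abs _ _
          _ ≤ ∑ _k ∈ Finset.range m, (K₁ * ((m : ℝ) / (N : ℝ)) ^ α / d ^ (1 + α)) :=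
              Finset.sum_le_sum hterm
          _ = (m : ℝ) * (K₁ * ((m : ℝ) / (N : ℝ)) ^ α / d ^ (1 + α)) := by
              rw [Finset.sum_const, Finset.card_range, nsmul_eq_mul]
    rwa [abs_mul, abs_of_nonneg (Nat.cast_nonneg m)] at hb
  rcases le_or_gt ((N : ℝ) * r) 1 with h1 | h1
  · -- small case: direct oscillation bound
    have hg1 : |cgrad N i u (t, z)| ≤ (N : ℝ) * K₀ := by
      rw [cgrad, abs_mul, abs_of_nonneg (Nat.cast_nonneg N)]
      exact mul_le_mul_of_nonneg_left (hosc _ _ (hmem _) (hmem _)) (Nat.cast_nonneg N)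
    have hg2 : (N : ℝ) * K₀ ≤ K₀ / r := by
      rw [le_div_iff₀ hr0]
      calc (N : ℝ) * K₀ * r = K₀ * ((N : ℝ) * r) := by ring
        _ ≤ K₀ * 1 := mul_le_mul_of_nonneg_left h1 hK0.le
        _ = K₀ := mul_one _
    calc d * |cgrad N i u (t, z)| ≤ d * (K₀ / r) :=
          mul_le_mul_of_nonneg_left (hg1.trans hg2) hd0.le
      _ = E := by rw [hdr, hI1]
      _ ≤ 3 * E := by linarith
  · -- main case: choose m = ⌈N r⌉
    obtain ⟨m, hmdef⟩ : ∃ m : ℕ, m = ⌈(N : ℝ) * r⌉₊ := ⟨_, rfl⟩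
    have hm1 : (N : ℝ) * r ≤ (m : ℝ) := by rw [hmdef]; exact Nat.le_ceil _
    have hm2 : (m : ℝ) ≤ 2 * ((N : ℝ) * r) := by
      have hlt : (⌈(N : ℝ) * r⌉₊ : ℝ) < (N : ℝ) * r + 1 :=
        Nat.ceil_lt_add_one (by positivity)
      rw [hmdef]
      linarith
    have hm0 : (0 : ℝ) < (m : ℝ) := lt_of_lt_of_le (by linarith) hm1
    have hNpos : (0 : ℝ) < (N : ℝ) := by exact_mod_cast hN
    have hg : |cgrad N i u (t, z)| ≤ (N : ℝ) * K₀ / (m : ℝ)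
        + K₁ * ((m : ℝ) / (N : ℝ)) ^ α / d ^ (1 + α) := by
      have h' : |cgrad N i u (t, z)| * (m : ℝ) ≤ (N : ℝ) * K₀
          + (m : ℝ) * (K₁ * ((m : ℝ) / (N : ℝ)) ^ α / d ^ (1 + α)) := by
        rw [mul_comm]; exact hmain m
      have h'' := (le_div_iff₀ hm0).mpr h'
      refine h''.trans (le_of_eq ?_)
      field_simp
    -- first piece
    have hp1 : d * ((N : ℝ) * K₀ / (m : ℝ)) ≤ E := by
      have hq : (N : ℝ) * K₀ / (m : ℝ) ≤ K₀ / r := by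
        rw [div_le_div_iff₀ hm0 hr0]
        calc (N : ℝ) * K₀ * r = K₀ * ((N : ℝ) * r) := by ring
          _ ≤ K₀ * (m : ℝ) := mul_le_mul_of_nonneg_left hm1 hK0.le
      calc d * ((N : ℝ) * K₀ / (m : ℝ)) ≤ d * (K₀ / r) :=
            mul_le_mul_of_nonneg_left hq hd0.le
        _ = E := by rw [hdr, hI1]
    -- second piece
    have hp2 : d * (K₁ * ((m : ℝ) / (N : ℝ)) ^ α / d ^ (1 + α)) ≤ 2 * (K₁ * θ ^ α) := by
      have hX : ((m : ℝ) / (N : ℝ)) ^ α ≤ 2 * (d ^ α * θ ^ α) := by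
        have hmn : (m : ℝ) / (N : ℝ) ≤ 2 * r := by
          rw [div_le_iff₀ hNpos]
          calc (m : ℝ) ≤ 2 * ((N : ℝ) * r) := hm2
            _ = 2 * r * (N : ℝ) := by ring
        calc ((m : ℝ) / (N : ℝ)) ^ α ≤ (2 * r) ^ α :=
              Real.rpow_le_rpow (by positivity) hmn hα0.le
          _ = 2 ^ α * r ^ α := Real.mul_rpow (by norm_num) hr0.le
          _ ≤ 2 * r ^ α := by
              have h2a : (2 : ℝ) ^ α ≤ 2 := by
                calc (2 : ℝ) ^ α ≤ (2 : ℝ) ^ (1 : ℝ) :=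
                      Real.rpow_le_rpow_of_exponent_le one_le_two hα1.le
                  _ = 2 := Real.rpow_one 2
              exact mul_le_mul_of_nonneg_right h2a (Real.rpow_nonneg hr0.le α)
          _ = 2 * (d ^ α * θ ^ α) := by rw [hrdef, Real.mul_rpow hd0.le hθ0.le]
      have hdd : d ^ (1 + α) = d * d ^ α := by
        rw [Real.rpow_add hd0, Real.rpow_one]
      have hdα : (0 : ℝ) < d ^ α := Real.rpow_pos_of_pos hd0 α
      calc d * (K₁ * ((m : ℝ) / (N : ℝ)) ^ α / d ^ (1 + α))
          ≤ d * (K₁ * (2 * (d ^ α * θ ^ α)) / d ^ (1 + α)) := by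
            refine mul_le_mul_of_nonneg_left ?_ hd0.le
            exact (div_le_div_iff_of_pos_right (Real.rpow_pos_of_pos hd0 _)).mpr
              (mul_le_mul_of_nonneg_left hX hK₁)
        _ = 2 * (K₁ * θ ^ α) := by
            rw [hdd]
            field_simp
    calc d * |cgrad N i u (t, z)|
        ≤ d * ((N : ℝ) * K₀ / (m : ℝ) + K₁ * ((m : ℝ) / (N : ℝ)) ^ α / d ^ (1 + α)) :=
          mul_le_mul_of_nonneg_left hg hd0.le
      _ = d * ((N : ℝ) * K₀ / (m : ℝ)) + d * (K₁ * ((m : ℝ) / (N : ℝ)) ^ α / d ^ (1 + α)) := by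
          ring
      _ ≤ E + 2 * (K₁ * θ ^ α) := add_le_add hp1 hp2
      _ ≤ E + 2 * E := by linarith
      _ = 3 * E := by ring
end

section
/- The interpolation commutes with discrete differentiation: for any function F on (ℤ/Nℤ)ⁿ and unit vector e, the polylinear interpolation of ∇ᴺ_e F equals ∇ᴺ_e applied to the polylinear interpolation of F, i.e., (∇ᴺ_e F)~(z) = N(F̃(z + e/N) − F̃(z)) for all z ∈ Tⁿ. -/
open Finset

/-- One-dimensional interpolation weight: `θᴺ(1,b) = {Nb}`, `θᴺ(0,b) = 1 - {Nb}`
(`{·}` the fractional part). -/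
noncomputable def interpWeight (N : ℕ) (b : Bool) (s : ℝ) : ℝ :=
  if b then Int.fract ((N : ℝ) * s) else 1 - Int.fract ((N : ℝ) * s)

/-- The polylinear interpolation
`ũᴺ(z) = Σ_{v ∈ {0,1}ⁿ} θᴺ(v,z) uᴺ((⌊Nz⌋+v)/N)` of a function on the
discrete torus. -/
noncomputable def interp {n N : ℕ} (u : (Fin n → ZMod N) → ℝ) (z : Fin n → ℝ) : ℝ :=
  ∑ v : Fin n → Bool,
    (∏ i : Fin n, interpWeight N (v i) (z i)) *
      u fun i => ((⌊(N : ℝ) * z i⌋ + (if v i then 1 else 0) : ℤ) : ZMod N)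

/-- The polylinear interpolation commutes with discrete differentiation, (3.24):
`(∇ᴺ_e F)~(z) = N (F̃(z + e/N) - F̃(z))`. -/
theorem stmt15 {n N : ℕ} (F : (Fin n → ZMod N) → ℝ) (e : Fin n → ℤ)
    (he : IsUnitVec e) (z : Fin n → ℝ) :
    interp (dgrad e F) z
      = (N : ℝ) * (interp F (fun j => z j + (e j : ℝ) / (N : ℝ)) - interp F z) := by
  rcases eq_or_ne (N : ℝ) 0 with hN | hN
  · simp [interp, dgrad, hN]
  · have h1 : interp F (fun j => z j + (e j : ℝ) / (N : ℝ))
        = ∑ v : Fin n → Bool, (∏ i, interpWeight N (v i) (z i)) *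
            F ((fun i => ((⌊(N : ℝ) * z i⌋ + (if v i then 1 else 0) : ℤ) : ZMod N)) + castVec e) := by
      unfold interp
      refine Finset.sum_congr rfl fun v _ => ?_
      have hmul : ∀ i, (N : ℝ) * (z i + (e i : ℝ) / (N : ℝ)) = (N : ℝ) * z i + (e i : ℤ) := by
        intro i; push_cast; field_simp
      congr 1
      · refine Finset.prod_congr rfl fun i _ => ?_
        unfold interpWeight
        rw [hmul, Int.fract_add_intCast]
      · congr 1
        funext i
        rw [hmul, Int.floor_add_intCast]
        simp [castVec, Pi.add_apply]
        push_cast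
        ring
    rw [h1]
    unfold interp dgrad
    rw [← Finset.sum_sub_distrib, Finset.mul_sum]
    refine Finset.sum_congr rfl fun v _ => ?_
    ring
end
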